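/- Let G be a monoid acting on a set X and let φ be a special filter on X with ⋂φ = {x_0}, and let τ_φ consist of all sets U⊆X such that for every g∈G with g•x_0∈U the preimage {x∈X : g•x∈U} belongs to φ. Then the character of τ_φ at x_0 is at least the character of φ: the least cardinality of a neighborhood base at x_0 in (X, τ_φ) is at least the least cardinality of a filter base of φ. -/

import Mathlib

open Topology Cardinal

universe u

/-- An injective transfinite sequence `(x_α)_{α<κ}` of points of a `G`-act `X` is *special*
(with least index `i₀`) if there is an enumeration `G = {g_α}_{α<κ}` of the monoid `G` such
that for all `α < κ` and all `β, γ, δ < α`: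
(1) if `g_β • x_{i₀} ≠ g_γ • x_{i₀}` then `g_β • x_α ≠ g_γ • x_α`, and
(2) if `g_β • x_{i₀} ≠ g_γ • x_δ` then `g_β • x_α ≠ g_γ • x_δ`. -/
def IsSpecialSeq (G : Type u) {X : Type u} [Monoid G] [MulAction G X] (κ : Cardinal.{u})
    (x : κ.ord.ToType → X) (i₀ : κ.ord.ToType) : Prop :=
  (∀ i, i₀ ≤ i) ∧ Function.Injective x ∧
  ∃ g : κ.ord.ToType → G, Function.Surjective g ∧
    ∀ α β γ δ : κ.ord.ToType, β < α → γ < α → δ < α →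
      (g β • x i₀ ≠ g γ • x i₀ → g β • x α ≠ g γ • x α) ∧
      (g β • x i₀ ≠ g γ • x δ → g β • x α ≠ g γ • x δ)

/-- A filter `φ` on a `G`-act `X` is *special* (with `⋂ φ = {x₀}`) if for some cardinal `κ`
there is a special sequence `(x_α)_{α<κ}` in `X` with first term `x₀` such that
`⋂ φ = {x₀}` and `{x₀} ∪ {x_β : α < β < κ} ∈ φ` for all `α < κ`. -/
def IsSpecialFilter (G : Type u) {X : Type u} [Monoid G] [MulAction G X]
    (φ : Filter X) (x₀ : X) : Prop :=
  ∃ (κ : Cardinal.{u}) (x : κ.ord.ToType → X) (i₀ : κ.ord.ToType),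
    IsSpecialSeq G κ x i₀ ∧ x i₀ = x₀ ∧ ⋂₀ φ.sets = {x₀} ∧
    ∀ α : κ.ord.ToType, insert x₀ (x '' Set.Ioi α) ∈ φ

/-- The topology `τ_φ`. -/
def tauPhi (G X : Type*) [Monoid G] [MulAction G X] (x₀ : X) (φ : Filter X) :
    TopologicalSpace X where
  IsOpen U := ∀ g : G, g • x₀ ∈ U → {x : X | g • x ∈ U} ∈ φ
  isOpen_univ := fun _ _ => Filter.univ_mem' fun _ => trivial
  isOpen_inter := fun U V hU hV g hg =>
    Filter.inter_mem (hU g hg.1) (hV g hg.2)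
  isOpen_sUnion := fun S hS g hg => by
    obtain ⟨t, htS, hgt⟩ := hg
    exact Filter.mem_of_superset (hS t htS g hgt) fun x hx => ⟨t, htS, hx⟩

/-- If `φ` is a special filter on a `G`-act `X` with `⋂ φ = {x₀}`, then the character of
`τ_φ` at `x₀` is at least the character of `φ`: the least cardinality of a neighborhood
base at `x₀` in `(X, τ_φ)` is at least the least cardinality of a filter base of `φ`. -/
theorem tauPhi_character_ge_of_specialFilter {G X : Type u} [Monoid G] [MulAction G X]
    (φ : Filter X) (x₀ : X) (hφ : IsSpecialFilter G φ x₀) :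
    sInf {c : Cardinal.{u} | ∃ 𝓕 : Set (Set X), 𝓕 ⊆ φ.sets ∧
        (∀ F ∈ φ, ∃ E ∈ 𝓕, E ⊆ F) ∧ #𝓕 = c} ≤
      sInf {c : Cardinal.{u} | ∃ 𝓑 : Set (Set X),
        (∀ B ∈ 𝓑, IsOpen[tauPhi G X x₀ φ] B ∧ x₀ ∈ B) ∧
        (∀ U : Set X, IsOpen[tauPhi G X x₀ φ] U → x₀ ∈ U → ∃ B ∈ 𝓑, B ⊆ U) ∧ #𝓑 = c} := by
  obtain ⟨κ, xs, i₀, ⟨hmin, hinj, g, gsurj, hspec⟩, hx0, hInt, htail⟩ := hφ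
  subst hx0
  obtain ⟨γ₁, hγ₁⟩ := gsurj 1
  have hx0F : ∀ F ∈ φ, xs i₀ ∈ F := by
    intro F hF
    have hmem : xs i₀ ∈ ⋂₀ φ.sets := by rw [hInt]; exact rfl
    exact hmem F hF
  have hRφ : Set.range xs ∈ φ := by
    refine Filter.mem_of_superset (htail i₀) ?_
    intro y hy
    rw [Set.mem_insert_iff] at hy
    rcases hy with rfl | ⟨α, _, rfl⟩
    · exact ⟨i₀, rfl⟩
    · exact ⟨α, rfl⟩
  have main : ∀ β α μ, β < α → γ₁ < α → g β • xs α = xs μ →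
      (μ < α ∧ g β • xs i₀ = xs μ) ∨ (μ = α ∧ g β • xs i₀ = xs i₀) := by
    intro β α μ hβα hγα hq
    have hi₀α : i₀ < α := lt_of_le_of_lt (hmin γ₁) hγα
    rcases lt_trichotomy μ α with hμ | rfl | hμ
    · left
      refine ⟨hμ, ?_⟩
      by_contra hne
      have h2 := (hspec α β γ₁ μ hβα hγα hμ).2
      rw [hγ₁] at h2
      simp only [one_smul] at h2
      exact h2 hne hq
    · right
      refine ⟨rfl, ?_⟩
      by_contra hne
      have h1 := (hspec μ β γ₁ i₀ hβα hγα hi₀α).1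
      rw [hγ₁] at h1
      simp only [one_smul] at h1
      exact h1 hne hq
    · exfalso
      have hqne : g β • xs α ≠ xs i₀ := by
        intro h0
        have hμi : μ = i₀ := hinj (hq.symm.trans h0)
        exact (ne_of_gt (hi₀α.trans hμ)) hμi
      have h4 := (hspec μ γ₁ β α (hγα.trans hμ) (hβα.trans hμ) hμ).2
      rw [hγ₁] at h4
      simp only [one_smul] at h4
      exact h4 (Ne.symm hqne) hq.symm
  have key : ∀ F ∈ φ, ∃ U : Set X,
      (∀ h : G, h • xs i₀ ∈ U → {y : X | h • y ∈ U} ∈ φ) ∧ xs i₀ ∈ U ∧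
      U ∩ Set.range xs ⊆ F := by
    intro F hF
    let U : ℕ → Set X := fun n =>
      Nat.rec ({xs i₀} : Set X)
        (fun _ S => S ∪ {q | ∃ β α, β < α ∧ γ₁ < α ∧ xs α ∈ F ∧
          g β • xs i₀ ∈ S ∧ q = g β • xs α}) n
    have hU0 : U 0 = {xs i₀} := rfl
    have hUs : ∀ n, U (n + 1) = U n ∪ {q | ∃ β α, β < α ∧ γ₁ < α ∧ xs α ∈ F ∧
          g β • xs i₀ ∈ U n ∧ q = g β • xs α} := fun n => rfl
    refine ⟨⋃ n, U n, ?_, Set.mem_iUnion.mpr ⟨0, rfl⟩, ?_⟩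
    · intro h hh
      obtain ⟨β, rfl⟩ := gsurj h
      obtain ⟨n, hn⟩ := Set.mem_iUnion.mp hh
      refine Filter.mem_of_superset
        (Filter.inter_mem hF (htail (max β γ₁))) ?_
      rintro y ⟨hyF, hyT⟩
      rw [Set.mem_insert_iff] at hyT
      rcases hyT with rfl | ⟨α, hα, rfl⟩
      · exact Set.mem_iUnion.mpr ⟨n, hn⟩
      · refine Set.mem_iUnion.mpr ⟨n + 1, ?_⟩
        rw [hUs n]
        exact Or.inr ⟨β, α, lt_of_le_of_lt (le_max_left _ _) hα,
          lt_of_le_of_lt (le_max_right _ _) hα, hyF, hn, rfl⟩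
    · have inv : ∀ n, ∀ q ∈ U n, q ∈ Set.range xs → q ∈ F := by
        intro n
        induction n with
        | zero =>
          intro q hq _
          rw [hU0, Set.mem_singleton_iff] at hq
          subst hq
          exact hx0F F hF
        | succ n ih =>
          intro q hq hqR
          rw [hUs n, Set.mem_union] at hq
          rcases hq with hq | hq
          · exact ih q hq hqR
          · simp only [Set.mem_setOf_eq] at hq
            obtain ⟨β, α, hβα, hγα, hxαF, hp, rfl⟩ := hq
            obtain ⟨μ, hμ⟩ := hqR
            rcases main β α μ hβα hγα hμ.symm with ⟨hμα, hpx⟩ | ⟨hμα, hpx⟩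
            · exact (hpx.trans hμ) ▸ ih _ hp ⟨μ, hpx.symm⟩
            · subst hμα
              exact hμ ▸ hxαF
      intro q hq
      obtain ⟨n, hn⟩ := Set.mem_iUnion.mp hq.1
      exact inv n q hn hq.2
  refine le_csInf ?_ ?_
  · exact ⟨#{U : Set X | IsOpen[tauPhi G X (xs i₀) φ] U ∧ xs i₀ ∈ U},
      {U : Set X | IsOpen[tauPhi G X (xs i₀) φ] U ∧ xs i₀ ∈ U},
      fun B hB => hB, fun U hU hx => ⟨U, ⟨hU, hx⟩, subset_rfl⟩, rfl⟩
  · rintro c ⟨𝓑, hB1, hB2, rfl⟩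
    have hBφ : ∀ B ∈ 𝓑, B ∈ φ := by
      intro B hB
      have ho : ∀ h : G, h • xs i₀ ∈ B → {y : X | h • y ∈ B} ∈ φ := (hB1 B hB).1
      have h1 := ho 1 (by rw [one_smul]; exact (hB1 B hB).2)
      simpa only [one_smul, Set.setOf_mem_eq] using h1
    refine le_trans (csInf_le' ⟨(fun B => B ∩ Set.range xs) '' 𝓑, ?_, ?_, rfl⟩)
      Cardinal.mk_image_le
    · rintro E ⟨B, hB, rfl⟩
      exact Filter.inter_mem (hBφ B hB) hRφ
    · intro F hF
      obtain ⟨U, hUo, hUx, hUF⟩ := key F hF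
      obtain ⟨B, hB, hBU⟩ := hB2 U hUo hUx
      exact ⟨B ∩ Set.range xs, ⟨B, hB, rfl⟩,
        fun y hy => hUF ⟨hBU hy.1, hy.2⟩⟩
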